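/- Let c be a configuration of K_n with c(v₁) = n−1 and c(v_i) ≤ n−2 for all i ≥ 2 (vertices sorted in nonincreasing order of chips). If c is not volatile, then the stable configuration obtained from c by repeatedly firing has the same number of in-chips as c. -/

import Mathlib

/-- Firing vertex `v` in `K_n`: remove `n-1` chips from `v`, add one chip to each other vertex. -/
def fireK (n : ℕ) (c : Fin n → ℕ) (v : Fin n) : Fin n → ℕ :=
  fun u => if u = v then c v - (n - 1) else c u + 1

/-- Configuration after firing `f 0, …, f (m-1)` in order in `K_n`. -/
def fireIterK (n : ℕ) (c : Fin n → ℕ) (f : ℕ → Fin n) : ℕ → Fin n → ℕ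
  | 0 => c
  | m + 1 => fireK n (fireIterK n c f m) (f m)

/-- A configuration of `K_n` is volatile if it admits an infinite legal firing sequence. -/
def VolatileK (n : ℕ) (c : Fin n → ℕ) : Prop :=
  ∃ f : ℕ → Fin n, ∀ m : ℕ, n - 1 ≤ fireIterK n c f m (f m)

/-- Configuration after firing a finite list of vertices in order in `K_n`. -/
def fireListK (n : ℕ) : (Fin n → ℕ) → List (Fin n) → (Fin n → ℕ)
  | c, [] => c
  | c, v :: l => fireListK n (fireK n c v) l

/-- A finite firing list in `K_n` is legal if each fired vertex has at least `n-1` chips. -/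
def LegalListK (n : ℕ) : (Fin n → ℕ) → List (Fin n) → Prop
  | _, [] => True
  | c, v :: l => n - 1 ≤ c v ∧ LegalListK n (fireK n c v) l

/-- The number of in-chips of a configuration of `K_n`: the number of filled cells inside
the critical triangle in the sorted grid representation, counted row by row. -/
def inChipsK (n : ℕ) (c : Fin n → ℕ) : ℕ :=
  ∑ k ∈ Finset.range n,
    min ((Finset.univ.filter fun v : Fin n => k + 1 ≤ c v).card) (n - (k + 1))

lemma fl_append (n : ℕ) (a b : List (Fin n)) (c : Fin n → ℕ) :
    fireListK n c (a ++ b) = fireListK n (fireListK n c a) b := by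
  induction a generalizing c with
  | nil => rfl
  | cons v tl ih => simp [fireListK, ih]

lemma take_succ_fire (n : ℕ) (l : List (Fin n)) (s : ℕ) (h : s < l.length) (c : Fin n → ℕ) :
    fireListK n c (l.take (s+1)) = fireK n (fireListK n c (l.take s)) (l.get ⟨s, h⟩) := by
  rw [← List.take_concat_get h, List.concat_eq_append, fl_append]
  rfl

lemma legal_get (n : ℕ) : ∀ (l : List (Fin n)) (c : Fin n → ℕ), LegalListK n c l →
    ∀ s (h : s < l.length), n - 1 ≤ fireListK n c (l.take s) (l.get ⟨s, h⟩) := by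
  intro l
  induction l with
  | nil => intro c _ s h; simp at h
  | cons v tl ih =>
    intro c hleg s h
    cases s with
    | zero => simpa [fireListK, List.take] using hleg.1
    | succ s =>
      have h' : s < tl.length := by simpa using h
      have := ih (fireK n c v) hleg.2 s h'
      simpa [List.take, fireListK] using this

lemma legal_take (n : ℕ) : ∀ (l : List (Fin n)) (c : Fin n → ℕ), LegalListK n c l →
    ∀ s, LegalListK n c (l.take s) := by
  intro l
  induction l with
  | nil => intro c _ s; simp [LegalListK]
  | cons v tl ih =>
    intro c hleg s
    cases s with
    | zero => trivial
    | succ s => exact ⟨hleg.1, ih (fireK n c v) hleg.2 s⟩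

lemma volatile_of_cycle (n : ℕ) (c : Fin n → ℕ) (l : List (Fin n)) (hl : 0 < l.length)
    (hleg : LegalListK n c l) (hcyc : fireListK n c l = c) : VolatileK n c := by
  set L := l.length with hL
  refine ⟨fun m => l.get ⟨m % L, Nat.mod_lt _ hl⟩, ?_⟩
  have key : ∀ m, fireIterK n c (fun m => l.get ⟨m % L, Nat.mod_lt _ hl⟩) m
      = fireListK n c (l.take (m % L)) := by
    intro m
    induction m with
    | zero => simp [fireIterK, Nat.zero_mod]; rfl
    | succ m ih =>
      show fireK n (fireIterK n c _ m) _ = _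
      rw [ih]
      have hmod : m % L < L := Nat.mod_lt _ hl
      have hstep : fireK n (fireListK n c (l.take (m % L))) (l.get ⟨m % L, hmod⟩)
          = fireListK n c (l.take (m % L + 1)) := (take_succ_fire n l (m % L) hmod c).symm
      rw [hstep]
      by_cases hc : m % L + 1 < L
      · have h2 : (m+1) % L = m % L + 1 := by
          rw [← Nat.mod_add_mod, Nat.mod_eq_of_lt hc]
        rw [h2]
      · have h2 : m % L + 1 = L := by omega
        have h3 : (m+1) % L = 0 := by
          rw [← Nat.mod_add_mod, h2, Nat.mod_self]
        rw [h3, h2, hL, List.take_length, hcyc]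
        rfl
  intro m
  rw [key]
  exact legal_get n l c hleg _ _

/-- If `c(v₁) = n-1`, `c(v_i) ≤ n-2` for `i ≥ 2` (vertices sorted
nonincreasingly) and `c` is not volatile, then the stable configuration obtained from `c`
by repeatedly firing has the same number of in-chips as `c`. -/
theorem stmt12 (n : ℕ) (hn : 2 ≤ n) (c : Fin n → ℕ) (hsort : Antitone c)
    (h0 : c ⟨0, by omega⟩ = n - 1)
    (h1 : ∀ i : Fin n, i ≠ ⟨0, by omega⟩ → c i ≤ n - 2)
    (hnvol : ¬ VolatileK n c)
    (l : List (Fin n)) (hleg : LegalListK n c l)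
    (hstable : ∀ v, fireListK n c l v < n - 1) :
    inChipsK n (fireListK n c l) = inChipsK n c := by
  have hc1 : ∀ u, c u ≤ n - 1 := by
    intro u
    by_cases h : u = ⟨0, by omega⟩
    · rw [h, h0]
    · exact le_trans (h1 u h) (by omega)
  -- master lemma
  have key : ∀ s, s ≤ l.length → (l.take s).Nodup ∧
      ∀ u, fireListK n c (l.take s) u + (if u ∈ l.take s then n else 0) = c u + s := by
    intro s
    induction s with
    | zero =>
      intro _
      refine ⟨by simp, ?_⟩
      intro u
      simp [fireListK]
    | succ s ih =>
      intro hs1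
      have hs : s < l.length := Nat.lt_of_succ_le hs1
      obtain ⟨hnd, hval⟩ := ih (le_of_lt hs)
      set v := l.get ⟨s, hs⟩ with hv
      have hlegv : n - 1 ≤ fireListK n c (l.take s) v := legal_get n l c hleg s hs
      by_cases hmem : v ∈ l.take s
      · exfalso
        have h1v := hval v
        rw [if_pos hmem] at h1v
        have hcv : c v ≤ n - 1 := hc1 v
        have hsn : n ≤ s := by omega
        have hlen : (l.take s).length = s := by
          rw [List.length_take]; omega
        have hsn2 : s ≤ n := by
          have h2 := List.Nodup.length_le_card hnd
          rwa [hlen, Fintype.card_fin] at h2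
        have hse : s = n := le_antisymm hsn2 hsn
        have huniv : (l.take s).toFinset = Finset.univ := by
          apply Finset.eq_univ_of_card
          rw [List.toFinset_card_of_nodup hnd, hlen, hse, Fintype.card_fin]
        have hall : fireListK n c (l.take s) = c := by
          funext u
          have hu : u ∈ l.take s := by
            rw [← List.mem_toFinset, huniv]; exact Finset.mem_univ u
          have h3 := hval u
          rw [if_pos hu] at h3
          omega
        exact hnvol (volatile_of_cycle n c (l.take s) (by omega)
          (legal_take n l c hleg s) hall)
      · have hconcat : l.take (s+1) = l.take s ++ [v] := by
          rw [← List.take_concat_get hs, List.concat_eq_append]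
          congr 1
        constructor
        · rw [hconcat, List.nodup_append]
          exact ⟨hnd, List.nodup_singleton v, by
            intro a ha b hb hab
            simp at hb
            exact hmem (by rw [← hb, ← hab]; exact ha)⟩
        · intro u
          rw [take_succ_fire n l s hs c]
          have hmem' : (u ∈ l.take (s+1)) ↔ (u ∈ l.take s ∨ u = v) := by
            rw [hconcat]; simp
          by_cases hu : u = v
          · rw [if_pos (hmem'.mpr (Or.inr hu))]
            have h1v := hval v
            rw [if_neg hmem] at h1v
            have hfk : fireK n (fireListK n c (l.take s)) (l.get ⟨s, hs⟩) u
                = fireListK n c (l.take s) v - (n-1) := by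
              rw [← hv]
              simp [fireK, hu]
            rw [hfk, hu]
            omega
          · have hval' : fireK n (fireListK n c (l.take s)) v u
                = fireListK n c (l.take s) u + 1 := by
              simp [fireK, hu]
            rw [hval']
            have h1u := hval u
            by_cases hu2 : u ∈ l.take s
            · rw [if_pos hu2] at h1u
              rw [if_pos (hmem'.mpr (Or.inl hu2))]
              omega
            · rw [if_neg hu2] at h1u
              rw [if_neg (by rw [hmem']; tauto)]
              omega
  obtain ⟨hnodup, hform⟩ := key l.length le_rfl
  rw [List.take_length] at hnodup hform
  set t := l.length with htdef
  set d := fireListK n c l with hddef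
  -- t < n
  have htn : t ≤ n := by
    have := List.Nodup.length_le_card hnodup
    rwa [Fintype.card_fin] at this
  have htne : t ≠ n := by
    intro hte
    have huniv : l.toFinset = Finset.univ := by
      apply Finset.eq_univ_of_card
      rw [List.toFinset_card_of_nodup hnodup, ← htdef, hte, Fintype.card_fin]
    have hv0 : (⟨0, by omega⟩ : Fin n) ∈ l := by
      rw [← List.mem_toFinset, huniv]; exact Finset.mem_univ _
    have h3 := hform ⟨0, by omega⟩
    rw [if_pos hv0] at h3
    have h4 := hstable ⟨0, by omega⟩
    omega
  have ht : t < n := lt_of_le_of_ne htn htne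
  set q := n - 1 - t with hqdef
  -- position-wise legality lower bound
  have hpos : ∀ p (hp : p < t), n - 1 ≤ c (l.get ⟨p, hp⟩) + p := by
    intro p hp
    have hlg := legal_get n l c hleg p hp
    obtain ⟨hnd', hval'⟩ := key p (le_of_lt hp)
    have hnp : l.get ⟨p, hp⟩ ∉ l.take p := by
      have h2 := (key (p+1) hp).1
      rw [← List.take_concat_get hp, List.concat_eq_append, List.nodup_append] at h2
      intro hcon
      exact h2.2.2 _ hcon _ (by simp) rfl
    have h3 := hval' (l.get ⟨p, hp⟩)
    rw [if_neg hnp] at h3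
    omega
  have hmem_lb : ∀ u ∈ l, n ≤ c u + t := by
    intro u hu
    obtain ⟨⟨p, hp⟩, rfl⟩ := List.mem_iff_get.mp hu
    have := hpos p hp
    omega
  have hfired_d : ∀ u ∈ l, d u + n = c u + t := by
    intro u hu
    have := hform u
    rwa [if_pos hu] at this
  have hunfired_d : ∀ u, u ∉ l → d u = c u + t := by
    intro u hu
    have := hform u
    rw [if_neg hu] at this
    omega
  have hstab2 : ∀ u, d u + 2 ≤ n := by
    intro u
    have := hstable u
    omega
  classical
  set B : ℕ → ℕ := fun j => (Finset.univ.filter fun u : Fin n => u ∉ l ∧ j + 1 ≤ c u).card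
    with hBdef
  -- row lemmas for c
  have Rc_low : ∀ k, k < q →
      min ((Finset.univ.filter fun u : Fin n => k + 1 ≤ c u).card) (n - (k+1))
        = t + min (B k) (q - k) := by
    intro k hk
    have hsplit : (Finset.univ.filter fun u : Fin n => k + 1 ≤ c u)
        = l.toFinset ∪ (Finset.univ.filter fun u : Fin n => u ∉ l ∧ k + 1 ≤ c u) := by
      ext u
      simp only [Finset.mem_filter, Finset.mem_union, List.mem_toFinset, Finset.mem_univ,
        true_and]
      constructor
      · intro h
        by_cases hu : u ∈ l
        · exact Or.inl hu
        · exact Or.inr ⟨hu, h⟩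
      · rintro (hu | ⟨_, h⟩)
        · have := hmem_lb u hu; omega
        · exact h
    have hdisj : Disjoint l.toFinset
        (Finset.univ.filter fun u : Fin n => u ∉ l ∧ k + 1 ≤ c u) := by
      rw [Finset.disjoint_left]
      intro a ha hb
      rw [List.mem_toFinset] at ha
      simp only [Finset.mem_filter] at hb
      exact hb.2.1 ha
    rw [hsplit, Finset.card_union_of_disjoint hdisj, List.toFinset_card_of_nodup hnodup,
      ← htdef]
    have he : n - (k+1) = t + (q - k) := by omega
    rw [he, hBdef]
    exact min_add_add_left t _ _
  have Rc_high : ∀ k, q ≤ k →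
      min ((Finset.univ.filter fun u : Fin n => k + 1 ≤ c u).card) (n - (k+1))
        = n - (k+1) := by
    intro k hk
    apply min_eq_right
    by_cases hkn : k + 1 ≤ n
    case neg => omega
    set j := n - 1 - k with hjdef
    have hjt : j ≤ t := by omega
    have hndj : (l.take j).Nodup := (List.take_sublist j l).nodup hnodup
    have hsub : (l.take j).toFinset ⊆ Finset.univ.filter fun u : Fin n => k + 1 ≤ c u := by
      intro u hu
      rw [List.mem_toFinset] at hu
      obtain ⟨⟨p, hp⟩, rfl⟩ := List.mem_iff_get.mp hu
      have hp' : p < j := by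
        have := hp
        rw [List.length_take] at this
        omega
      have hpt : p < t := by omega
      have hget : (l.take j).get ⟨p, hp⟩ = l.get ⟨p, hpt⟩ := by
        simp [List.getElem_take]
      rw [hget]
      simp only [Finset.mem_filter, Finset.mem_univ, true_and]
      have := hpos p hpt
      omega
    have hcard : (l.take j).toFinset.card = j := by
      rw [List.toFinset_card_of_nodup hndj, List.length_take]
      omega
    calc n - (k+1) = j := by omega
      _ = (l.take j).toFinset.card := hcard.symm
      _ ≤ _ := Finset.card_le_card hsub
  -- row lemmas for d
  have Rd_low : ∀ k, k < t →
      min ((Finset.univ.filter fun u : Fin n => k + 1 ≤ d u).card) (n - (k+1))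
        = n - (k+1) := by
    intro k hk
    apply min_eq_right
    have hndj : (l.take (t-1-k)).Nodup := (List.take_sublist _ l).nodup hnodup
    have hsub : (Finset.univ \ l.toFinset) ∪ (l.take (t-1-k)).toFinset
        ⊆ Finset.univ.filter fun u : Fin n => k + 1 ≤ d u := by
      intro u hu
      simp only [Finset.mem_union, Finset.mem_sdiff, Finset.mem_univ, true_and,
        List.mem_toFinset] at hu
      simp only [Finset.mem_filter, Finset.mem_univ, true_and]
      rcases hu with hu | hu
      · have := hunfired_d u hu
        omega
      · obtain ⟨⟨p, hp⟩, rfl⟩ := List.mem_iff_get.mp hu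
        have hp' : p < t - 1 - k := by
          have := hp; rw [List.length_take] at this; omega
        have hpt : p < t := by omega
        have hget : (l.take (t-1-k)).get ⟨p, hp⟩ = l.get ⟨p, hpt⟩ := by
          simp [List.getElem_take]
        rw [hget]
        have h5 := hpos p hpt
        have h6 := hfired_d (l.get ⟨p, hpt⟩) (List.get_mem l ⟨p, hpt⟩)
        omega
    have hdisj : Disjoint (Finset.univ \ l.toFinset) (l.take (t-1-k)).toFinset := by
      rw [Finset.disjoint_left]
      intro a ha hb
      simp only [Finset.mem_sdiff, Finset.mem_univ, true_and, List.mem_toFinset] at ha hb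
      exact ha (List.mem_of_mem_take hb)
    have hcard : ((Finset.univ \ l.toFinset) ∪ (l.take (t-1-k)).toFinset).card
        = (n - t) + (t - 1 - k) := by
      rw [Finset.card_union_of_disjoint hdisj, Finset.card_sdiff_of_subset (Finset.subset_univ _),
        Finset.card_univ, Fintype.card_fin, List.toFinset_card_of_nodup hnodup,
        List.toFinset_card_of_nodup hndj, List.length_take, ← htdef]
      congr 1
      omega
    calc n - (k+1) = (n - t) + (t - 1 - k) := by omega
      _ = _ := hcard.symm
      _ ≤ _ := Finset.card_le_card hsub
  have Rd_high : ∀ k, t ≤ k →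
      (Finset.univ.filter fun u : Fin n => k + 1 ≤ d u).card = B (k - t) := by
    intro k hk
    rw [hBdef]
    congr 1
    ext u
    simp only [Finset.mem_filter, Finset.mem_univ, true_and]
    by_cases hu : u ∈ l
    · have h5 := hfired_d u hu
      have h6 := hc1 u
      constructor
      · intro h7; omega
      · intro h7; exact absurd hu h7.1
    · have h5 := hunfired_d u hu
      constructor
      · intro h7; exact ⟨hu, by omega⟩
      · intro h7; omega
  -- assemble
  show inChipsK n d = inChipsK n c
  unfold inChipsK
  have hnq : n = t + (q + 1) := by omega
  have hnq' : n = q + (t + 1) := by omega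
  have hLHS : ∑ k ∈ Finset.range n,
      min ((Finset.univ.filter fun u : Fin n => k + 1 ≤ d u).card) (n - (k+1))
      = (∑ k ∈ Finset.range t, (n - (k+1))) + ∑ j ∈ Finset.range (q+1), min (B j) (q - j) := by
    have hrange : Finset.range n = Finset.range (t + (q+1)) := by rw [← hnq]
    rw [hrange, Finset.sum_range_add]
    congr 1
    · apply Finset.sum_congr rfl
      intro k hk
      rw [Finset.mem_range] at hk
      exact Rd_low k hk
    · apply Finset.sum_congr rfl
      intro j hj
      rw [Finset.mem_range] at hj
      rw [Rd_high (t + j) (by omega)]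
      have e1 : t + j - t = j := by omega
      have e2 : n - (t + j + 1) = q - j := by omega
      rw [e1, e2]
  have hRHS : ∑ k ∈ Finset.range n,
      min ((Finset.univ.filter fun u : Fin n => k + 1 ≤ c u).card) (n - (k+1))
      = (∑ k ∈ Finset.range q, (t + min (B k) (q - k)))
        + ∑ i ∈ Finset.range (t+1), (n - (q+i+1)) := by
    have hrange : Finset.range n = Finset.range (q + (t+1)) := by rw [← hnq']
    rw [hrange, Finset.sum_range_add]
    congr 1
    · apply Finset.sum_congr rfl
      intro k hk
      rw [Finset.mem_range] at hk
      exact Rc_low k hk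
    · apply Finset.sum_congr rfl
      intro i hi
      have := Rc_high (q + i) (by omega)
      rw [this]
  rw [hLHS, hRHS]
  have e1 : ∑ k ∈ Finset.range t, (n - (k+1)) = ∑ k ∈ Finset.range t, (q + 1 + k) := by
    rw [← Finset.sum_range_reflect (fun k => q + 1 + k) t]
    apply Finset.sum_congr rfl
    intro k hk
    rw [Finset.mem_range] at hk
    omega
  have e2 : ∑ i ∈ Finset.range (t+1), (n - (q+i+1)) = ∑ i ∈ Finset.range (t+1), i := by
    rw [← Finset.sum_range_reflect (fun i => i) (t+1)]
    apply Finset.sum_congr rfl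
    intro i hi
    rw [Finset.mem_range] at hi
    omega
  rw [e1, e2]
  have e3 : ∑ j ∈ Finset.range (q+1), min (B j) (q - j)
      = ∑ j ∈ Finset.range q, min (B j) (q - j) := by
    rw [Finset.sum_range_succ]
    simp
  rw [e3]
  have e4 : ∑ k ∈ Finset.range t, (q + 1 + k) = t * (q + 1) + ∑ k ∈ Finset.range t, k := by
    rw [Finset.sum_add_distrib, Finset.sum_const, Finset.card_range, smul_eq_mul]
  have e5 : ∑ k ∈ Finset.range q, (t + min (B k) (q - k))
      = q * t + ∑ k ∈ Finset.range q, min (B k) (q - k) := by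
    rw [Finset.sum_add_distrib, Finset.sum_const, Finset.card_range, smul_eq_mul]
  have e6 : ∑ i ∈ Finset.range (t+1), i = (∑ i ∈ Finset.range t, i) + t :=
    Finset.sum_range_succ _ _
  rw [e4, e5, e6]
  ring
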